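/- Ballot sequences of length 2n (binary sequences with n ones and n zeros such that every prefix has at least as many ones as zeros) are in bijection with upper order ideals in the poset of positive roots of type A_{n-1}. -/

import Mathlib

namespace BI

variable (n : ℕ)

/-- number of zeros of `b` among the first `m` entries -/
def zc (b : Fin (2*n) → Bool) (m : ℕ) : ℕ :=
  ((Finset.univ : Finset (Fin (2*n))).filter (fun t : Fin (2*n) => (t:ℕ) < m ∧ b t = false)).card

/-- number of ones of `b` among the first `m` entries -/
def oc (b : Fin (2*n) → Bool) (m : ℕ) : ℕ :=
  ((Finset.univ : Finset (Fin (2*n))).filter (fun t : Fin (2*n) => (t:ℕ) < m ∧ b t = true)).card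

lemma zc_mono (b : Fin (2*n) → Bool) {m m' : ℕ} (h : m ≤ m') : zc n b m ≤ zc n b m' := by
  apply Finset.card_le_card
  intro t ht
  simp only [Finset.mem_filter, Finset.mem_univ, true_and] at *
  exact ⟨lt_of_lt_of_le ht.1 h, ht.2⟩

lemma oc_mono (b : Fin (2*n) → Bool) {m m' : ℕ} (h : m ≤ m') : oc n b m ≤ oc n b m' := by
  apply Finset.card_le_card
  intro t ht
  simp only [Finset.mem_filter, Finset.mem_univ, true_and] at *
  exact ⟨lt_of_lt_of_le ht.1 h, ht.2⟩

lemma zc_lip (b : Fin (2*n) → Bool) {m m' : ℕ} (h : m ≤ m') :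
    zc n b m' ≤ zc n b m + (m' - m) := by
  have hsub : (Finset.univ : Finset (Fin (2*n))).filter (fun t : Fin (2*n) => (t:ℕ) < m' ∧ b t = false) ⊆
      ((Finset.univ : Finset (Fin (2*n))).filter (fun t : Fin (2*n) => (t:ℕ) < m ∧ b t = false)) ∪
      ((Finset.univ : Finset (Fin (2*n))).filter (fun t : Fin (2*n) => m ≤ (t:ℕ) ∧ (t:ℕ) < m')) := by
    intro t ht
    simp only [Finset.mem_filter, Finset.mem_union, Finset.mem_univ, true_and] at *
    rcases lt_or_ge (t:ℕ) m with h1 | h1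
    · exact Or.inl ⟨h1, ht.2⟩
    · exact Or.inr ⟨h1, ht.1⟩
  calc zc n b m' ≤ _ := Finset.card_le_card hsub
    _ ≤ _ + _ := Finset.card_union_le _ _
    _ ≤ zc n b m + (m' - m) := by
        apply Nat.add_le_add_left
        rw [show m' - m = (Finset.range (m' - m)).card from (Finset.card_range _).symm]
        apply Finset.card_le_card_of_injOn (fun t : Fin (2*n) => (t:ℕ) - m)
        · intro t ht
          simp only [Finset.mem_coe, Finset.mem_filter, Finset.mem_univ, true_and] at ht
          simp only [Finset.mem_coe, Finset.mem_range]
          omega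
        · intro t ht s hs hts
          simp only [Finset.coe_filter, Set.mem_setOf_eq, Finset.mem_univ, true_and] at ht hs
          dsimp only at hts
          apply Fin.val_injective
          omega

lemma card_lt (m : ℕ) (hm : m ≤ 2*n) :
    ((Finset.univ : Finset (Fin (2*n))).filter (fun t : Fin (2*n) => (t:ℕ) < m)).card = m := by
  have : ((Finset.univ : Finset (Fin (2*n))).filter (fun t : Fin (2*n) => (t:ℕ) < m)) =
      (Finset.univ : Finset (Fin m)).image (Fin.castLE hm) := by
    ext t
    simp only [Finset.mem_filter, Finset.mem_univ, true_and, Finset.mem_image]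
    constructor
    · intro ht; exact ⟨⟨t, ht⟩, rfl⟩
    · rintro ⟨s, -, rfl⟩; exact s.isLt
  rw [this, Finset.card_image_of_injective _ (Fin.castLE_injective hm)]
  simp

lemma zc_add_oc (b : Fin (2*n) → Bool) (m : ℕ) (hm : m ≤ 2*n) :
    zc n b m + oc n b m = m := by
  have e1 : (Finset.univ : Finset (Fin (2*n))).filter (fun t : Fin (2*n) => (t:ℕ) < m ∧ b t = false)
      = ((Finset.univ : Finset (Fin (2*n))).filter (fun t : Fin (2*n) => (t:ℕ) < m)).filter
          (fun t => ¬ (b t = true)) := by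
    ext t
    simp only [Finset.mem_filter, Finset.mem_univ, true_and, Bool.not_eq_true]
  have e2 : (Finset.univ : Finset (Fin (2*n))).filter (fun t : Fin (2*n) => (t:ℕ) < m ∧ b t = true)
      = ((Finset.univ : Finset (Fin (2*n))).filter (fun t : Fin (2*n) => (t:ℕ) < m)).filter
          (fun t => b t = true) := by
    rw [Finset.filter_filter]
  rw [zc, oc, e1, e2, Nat.add_comm,
    Finset.card_filter_add_card_filter_not (fun t => b t = true), card_lt n m hm]


/-- Ballot property in terms of `zc`/`oc`. -/
def IsBallot (b : Fin (2*n) → Bool) : Prop :=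
  (Finset.univ.filter (fun i => b i = true)).card = n ∧
  (Finset.univ.filter (fun i => b i = false)).card = n ∧
  ∀ j : Fin (2 * n),
    (Finset.univ.filter (fun i => i ≤ j ∧ b i = false)).card ≤
    (Finset.univ.filter (fun i => i ≤ j ∧ b i = true)).card

lemma oc_total (b : Fin (2*n) → Bool) (hb : IsBallot n b) : oc n b (2*n) = n := by
  have e : (Finset.univ : Finset (Fin (2*n))).filter (fun t : Fin (2*n) => (t:ℕ) < 2*n ∧ b t = true)
      = Finset.univ.filter (fun i => b i = true) := by
    ext t
    simp [t.isLt]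
  rw [oc, e]
  exact hb.1

lemma zc_total (b : Fin (2*n) → Bool) (hb : IsBallot n b) : zc n b (2*n) = n := by
  have e : (Finset.univ : Finset (Fin (2*n))).filter (fun t : Fin (2*n) => (t:ℕ) < 2*n ∧ b t = false)
      = Finset.univ.filter (fun i => b i = false) := by
    ext t
    simp [t.isLt]
  rw [zc, e]
  exact hb.2.1

lemma zc_le_half (b : Fin (2*n) → Bool) (hb : IsBallot n b) (m : ℕ) (hm : m ≤ 2*n) :
    2 * zc n b m ≤ m := by
  rcases Nat.eq_zero_or_pos m with rfl | hm0
  · simp [zc]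
  have hj : m - 1 < 2*n := by omega
  have := hb.2.2 ⟨m - 1, hj⟩
  have ez : (Finset.univ.filter (fun i : Fin (2*n) => i ≤ (⟨m-1, hj⟩ : Fin (2*n)) ∧ b i = false))
      = Finset.univ.filter (fun t : Fin (2*n) => (t:ℕ) < m ∧ b t = false) := by
    ext t
    simp only [Finset.mem_filter, Finset.mem_univ, true_and, Fin.le_def]
    constructor <;> (rintro ⟨h1, h2⟩; exact ⟨by omega, h2⟩)
  have eo : (Finset.univ.filter (fun i : Fin (2*n) => i ≤ (⟨m-1, hj⟩ : Fin (2*n)) ∧ b i = true))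
      = Finset.univ.filter (fun t : Fin (2*n) => (t:ℕ) < m ∧ b t = true) := by
    ext t
    simp only [Finset.mem_filter, Finset.mem_univ, true_and, Fin.le_def]
    constructor <;> (rintro ⟨h1, h2⟩; exact ⟨by omega, h2⟩)
  rw [ez, eo] at this
  have := zc_add_oc n b m hm
  rw [zc, oc] at *
  omega

lemma zc_lb (b : Fin (2*n) → Bool) (hb : IsBallot n b) (m : ℕ) (hm : m ≤ 2*n) :
    m ≤ n + zc n b m := by
  have h1 : oc n b m ≤ n := le_trans (oc_mono n b hm) (le_of_eq (oc_total n b hb))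
  have h2 := zc_add_oc n b m hm
  omega

/-- The ideal associated to a ballot sequence. -/
def idl (b : Fin (2*n) → Bool) : Finset (Fin (n-1) × Fin (n-1)) :=
  Finset.univ.filter (fun p => p.1 ≤ p.2 ∧ (p.1:ℕ) + 1 ≤ zc n b ((p.1:ℕ) + (p.2:ℕ) + 2))

lemma idl_le (b : Fin (2*n) → Bool) : ∀ p ∈ idl n b, p.1 ≤ p.2 := by
  intro p hp
  rw [idl, Finset.mem_filter] at hp
  exact hp.2.1

lemma idl_upper (b : Fin (2*n) → Bool) :
    ∀ p ∈ idl n b, ∀ q : Fin (n-1) × Fin (n-1),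
      q.1 ≤ q.2 → q.1 ≤ p.1 → p.2 ≤ q.2 → q ∈ idl n b := by
  intro p hp q hq1 hq2 hq3
  rw [idl, Finset.mem_filter] at hp ⊢
  refine ⟨Finset.mem_univ _, hq1, ?_⟩
  obtain ⟨-, -, hz⟩ := hp
  rw [Fin.le_def] at hq1 hq2 hq3
  set m := (p.1:ℕ) + (p.2:ℕ) + 2 with hm
  set m' := (q.1:ℕ) + (q.2:ℕ) + 2 with hm'
  rcases le_total m m' with h | h
  · have := zc_mono n b h
    omega
  · have := zc_lip n b h
    omega


lemma zc_le_of_idl (b b' : Fin (2*n) → Bool) (hb : IsBallot n b) (hb' : IsBallot n b')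
    (heq : idl n b = idl n b') (m : ℕ) (hm : m ≤ 2*n) : zc n b m ≤ zc n b' m := by
  have h2 := zc_le_half n b hb m hm
  have h3 := zc_lb n b' hb' m hm
  by_cases hc : zc n b m ≤ m - n
  · omega
  rcases Nat.eq_zero_or_pos (zc n b m) with h0 | h0
  · omega
  set z := zc n b m with hz
  have hi : z - 1 < n - 1 := by omega
  have hjlt : m - 1 - z < n - 1 := by omega
  have hpmem : ((⟨z-1, hi⟩, ⟨m-1-z, hjlt⟩) : Fin (n-1) × Fin (n-1)) ∈ idl n b := by
    rw [idl, Finset.mem_filter]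
    refine ⟨Finset.mem_univ _, ?_, ?_⟩
    · rw [Fin.le_def]
      simp only []
      omega
    · simp only []
      have e : (z-1) + (m-1-z) + 2 = m := by omega
      rw [e]
      omega
  rw [heq, idl, Finset.mem_filter] at hpmem
  obtain ⟨-, -, hzz⟩ := hpmem
  simp only [] at hzz
  have e : (z-1) + (m-1-z) + 2 = m := by omega
  rw [e] at hzz
  omega

lemma zc_step (b : Fin (2*n) → Bool) (t : Fin (2*n)) :
    zc n b ((t:ℕ)+1) = zc n b (t:ℕ) + (if b t = false then 1 else 0) := by
  by_cases hP : b t = false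
  · have e : (Finset.univ : Finset (Fin (2*n))).filter (fun x : Fin (2*n) => (x:ℕ) < (t:ℕ)+1 ∧ b x = false)
        = insert t ((Finset.univ : Finset (Fin (2*n))).filter (fun x : Fin (2*n) => (x:ℕ) < (t:ℕ) ∧ b x = false)) := by
      ext x
      simp only [Finset.mem_filter, Finset.mem_univ, true_and, Finset.mem_insert]
      constructor
      · rintro ⟨h1, h2⟩
        rcases Nat.lt_or_ge (x:ℕ) (t:ℕ) with h | h
        · exact Or.inr ⟨h, h2⟩
        · exact Or.inl (Fin.val_injective (by omega))
      · rintro (rfl | ⟨h1, h2⟩)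
        · exact ⟨by omega, hP⟩
        · exact ⟨by omega, h2⟩
    rw [zc, zc, e, Finset.card_insert_of_notMem, if_pos hP]
    simp only [Finset.mem_filter, Finset.mem_univ, true_and]
    rintro ⟨h1, -⟩
    omega
  · have e : (Finset.univ : Finset (Fin (2*n))).filter (fun x : Fin (2*n) => (x:ℕ) < (t:ℕ)+1 ∧ b x = false)
        = (Finset.univ : Finset (Fin (2*n))).filter (fun x : Fin (2*n) => (x:ℕ) < (t:ℕ) ∧ b x = false) := by
      ext x
      simp only [Finset.mem_filter, Finset.mem_univ, true_and]
      constructor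
      · rintro ⟨h1, h2⟩
        refine ⟨?_, h2⟩
        rcases Nat.lt_or_ge (x:ℕ) (t:ℕ) with h | h
        · exact h
        · have hxt : x = t := Fin.val_injective (by omega)
          rw [hxt] at h2
          exact absurd h2 hP
      · rintro ⟨h1, h2⟩
        exact ⟨by omega, h2⟩
    rw [zc, zc, e, if_neg hP, Nat.add_zero]

lemma idl_inj (b b' : Fin (2*n) → Bool) (hb : IsBallot n b) (hb' : IsBallot n b')
    (heq : idl n b = idl n b') : b = b' := by
  have hzc : ∀ m, m ≤ 2*n → zc n b m = zc n b' m := fun m hm =>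
    le_antisymm (zc_le_of_idl n b b' hb hb' heq m hm)
      (zc_le_of_idl n b' b hb' hb heq.symm m hm)
  funext t
  have e1 := zc_step n b t
  have e2 := zc_step n b' t
  have h1 := hzc (t:ℕ) (by omega)
  have h2 := hzc ((t:ℕ)+1) (by omega)
  cases hx : b t <;> cases hy : b' t <;> simp [hx, hy] at e1 e2 ⊢ <;> omega


lemma mem_upclosed_iff {m : ℕ} (S : Finset (Fin m)) (h : ∀ a ∈ S, ∀ b, a ≤ b → b ∈ S)
    (j : Fin m) : j ∈ S ↔ m - S.card ≤ (j:ℕ) := by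
  rcases S.eq_empty_or_nonempty with rfl | hS
  · simp only [Finset.notMem_empty, false_iff, Finset.card_empty, Nat.sub_zero, not_le]
    exact j.isLt
  · set a := S.min' hS with ha
    have hSa : S = Finset.Ici a := by
      ext x
      simp only [Finset.mem_Ici]
      exact ⟨fun hx => S.min'_le x hx, fun hx => h a (S.min'_mem hS) x hx⟩
    rw [hSa, Fin.card_Ici, Finset.mem_Ici, Fin.le_def]
    have := a.isLt
    omega

variable (I : Finset (Fin (n-1) × Fin (n-1)))

/-- row count -/
def rc (i : ℕ) : ℕ :=
  if h : i < n-1 then (Finset.univ.filter (fun j : Fin (n-1) => ((⟨i, h⟩ : Fin (n-1)), j) ∈ I)).card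
  else 0

def IsIdeal : Prop :=
  (∀ p ∈ I, p.1 ≤ p.2) ∧
  (∀ p ∈ I, ∀ q : Fin (n-1) × Fin (n-1), q.1 ≤ q.2 → q.1 ≤ p.1 → p.2 ≤ q.2 → q ∈ I)

lemma rc_le (hI : IsIdeal n I) (i : ℕ) (hi : i < n-1) : rc n I i + i + 1 ≤ n := by
  rw [rc, dif_pos hi]
  have hsub : Finset.univ.filter (fun j : Fin (n-1) => ((⟨i, hi⟩ : Fin (n-1)), j) ∈ I)
      ⊆ Finset.Ici (⟨i, hi⟩ : Fin (n-1)) := by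
    intro j hj
    rw [Finset.mem_filter] at hj
    rw [Finset.mem_Ici]
    exact hI.1 _ hj.2
  have := Finset.card_le_card hsub
  rw [Fin.card_Ici] at this
  have hv : (((⟨i, hi⟩ : Fin (n-1))) : ℕ) = i := rfl
  rw [hv] at this
  omega

lemma rc_anti (hI : IsIdeal n I) {i i' : ℕ} (h : i' ≤ i) (hi : i < n-1) :
    rc n I i ≤ rc n I i' := by
  have hi' : i' < n-1 := lt_of_le_of_lt h hi
  rw [rc, dif_pos hi, rc, dif_pos hi']
  apply Finset.card_le_card
  intro j hj
  rw [Finset.mem_filter] at hj ⊢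
  refine ⟨Finset.mem_univ _, ?_⟩
  apply hI.2 _ hj.2 (⟨i', hi'⟩, j)
  · rw [Fin.le_def]
    have := hI.1 _ hj.2
    rw [Fin.le_def] at this
    simp only [] at this ⊢
    omega
  · rw [Fin.le_def]; simp only []; omega
  · exact le_refl _

lemma mem_iff_rc (hI : IsIdeal n I) (p : Fin (n-1) × Fin (n-1)) :
    p ∈ I ↔ (n-1) - rc n I (p.1:ℕ) ≤ (p.2:ℕ) := by
  have hlt : (p.1:ℕ) < n-1 := p.1.isLt
  rw [rc, dif_pos hlt]
  have hup : ∀ a ∈ Finset.univ.filter (fun j : Fin (n-1) => ((⟨(p.1:ℕ), hlt⟩ : Fin (n-1)), j) ∈ I),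
      ∀ b, a ≤ b → b ∈ Finset.univ.filter (fun j : Fin (n-1) => ((⟨(p.1:ℕ), hlt⟩ : Fin (n-1)), j) ∈ I) := by
    intro a ha b hab
    rw [Finset.mem_filter] at ha ⊢
    refine ⟨Finset.mem_univ _, ?_⟩
    apply hI.2 _ ha.2 (⟨(p.1:ℕ), hlt⟩, b)
    · exact le_trans (hI.1 (⟨(p.1:ℕ), hlt⟩, a) ha.2) hab
    · exact le_refl _
    · exact hab
  have key := mem_upclosed_iff _ hup p.2
  rw [← key, Finset.mem_filter]
  exact ⟨fun h => ⟨Finset.mem_univ _, h⟩, fun h => h.2⟩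


def pos (k : ℕ) : ℕ := if k < n-1 then n - rc n I k + k else 2*n - 1

lemma pos_lb (hI : IsIdeal n I) (k : ℕ) (hk : k < n) : 2*k+1 ≤ pos n I k := by
  rw [pos]
  split_ifs with h
  · have := rc_le n I hI k h
    omega
  · omega

lemma pos_ub (hn : 1 ≤ n) (hI : IsIdeal n I) (k : ℕ) (hk : k < n) : pos n I k < 2*n := by
  rw [pos]
  split_ifs with h
  · have := rc_le n I hI k h
    omega
  · omega

lemma pos_strictMono (hI : IsIdeal n I) {k k' : ℕ} (h : k < k') (hk' : k' < n) :
    pos n I k < pos n I k' := by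
  have hk1 : k < n - 1 := by omega
  rw [pos, pos, if_pos hk1]
  split_ifs with h2
  · have h3 := rc_anti n I hI (le_of_lt h) h2
    have h4 := rc_le n I hI k' h2
    omega
  · have := rc_le n I hI k hk1
    omega

def bI : Fin (2*n) → Bool := fun t => decide (∀ k, k < n → pos n I k ≠ (t:ℕ))

lemma bI_false_iff (t : Fin (2*n)) : bI n I t = false ↔ ∃ k, k < n ∧ pos n I k = (t:ℕ) := by
  rw [bI]
  simp only [decide_eq_false_iff_not, not_forall]
  constructor
  · rintro ⟨k, hk, hne⟩
    exact ⟨k, hk, by omega⟩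
  · rintro ⟨k, hk, he⟩
    exact ⟨k, hk, fun hne => hne he⟩

lemma zeros_eq (hn : 1 ≤ n) (hI : IsIdeal n I) :
    Finset.univ.filter (fun t : Fin (2*n) => bI n I t = false)
      = Finset.univ.image (fun k : Fin n => (⟨pos n I (k:ℕ), pos_ub n I hn hI (k:ℕ) k.isLt⟩ : Fin (2*n))) := by
  ext t
  simp only [Finset.mem_filter, Finset.mem_univ, true_and, Finset.mem_image, bI_false_iff]
  constructor
  · rintro ⟨k, hk, he⟩
    exact ⟨⟨k, hk⟩, Fin.val_injective he⟩
  · rintro ⟨k, -, rfl⟩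
    exact ⟨(k:ℕ), k.isLt, rfl⟩

lemma posF_injective (hn : 1 ≤ n) (hI : IsIdeal n I) :
    Function.Injective (fun k : Fin n => (⟨pos n I (k:ℕ), pos_ub n I hn hI (k:ℕ) k.isLt⟩ : Fin (2*n))) := by
  have hsm : StrictMono (fun k : Fin n => (⟨pos n I (k:ℕ), pos_ub n I hn hI (k:ℕ) k.isLt⟩ : Fin (2*n))) := by
    intro k k' hkk
    rw [Fin.lt_def]
    exact pos_strictMono n I hI (by rwa [Fin.lt_def] at hkk) k'.isLt
  exact hsm.injective

lemma zeros_card (hn : 1 ≤ n) (hI : IsIdeal n I) :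
    (Finset.univ.filter (fun t : Fin (2*n) => bI n I t = false)).card = n := by
  rw [zeros_eq n I hn hI, Finset.card_image_of_injective _ (posF_injective n I hn hI)]
  simp

lemma bI_ballot (hn : 1 ≤ n) (hI : IsIdeal n I) : IsBallot n (bI n I) := by
  have hz := zeros_card n I hn hI
  have htot : (Finset.univ.filter (fun t : Fin (2*n) => bI n I t = true)).card
      + (Finset.univ.filter (fun t : Fin (2*n) => bI n I t = false)).card = 2*n := by
    have e : (Finset.univ.filter (fun t : Fin (2*n) => bI n I t = false))
        = (Finset.univ.filter (fun t : Fin (2*n) => ¬ (bI n I t = true))) := by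
      ext t
      simp
    rw [e, Finset.card_filter_add_card_filter_not (fun t => bI n I t = true)]
    simp
  refine ⟨by omega, hz, ?_⟩
  intro j
  -- the two prefix filter sets
  have hcards : (Finset.univ.filter (fun i : Fin (2*n) => i ≤ j ∧ bI n I i = false)).card +
      (Finset.univ.filter (fun i : Fin (2*n) => i ≤ j ∧ bI n I i = true)).card = (j:ℕ) + 1 := by
    have ez : (Finset.univ.filter (fun i : Fin (2*n) => i ≤ j ∧ bI n I i = false))
        = Finset.univ.filter (fun t : Fin (2*n) => (t:ℕ) < (j:ℕ)+1 ∧ bI n I t = false) := by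
      ext t
      simp only [Finset.mem_filter, Finset.mem_univ, true_and, Fin.le_def]
      constructor <;> (rintro ⟨h1, h2⟩; exact ⟨by omega, h2⟩)
    have eo : (Finset.univ.filter (fun i : Fin (2*n) => i ≤ j ∧ bI n I i = true))
        = Finset.univ.filter (fun t : Fin (2*n) => (t:ℕ) < (j:ℕ)+1 ∧ bI n I t = true) := by
      ext t
      simp only [Finset.mem_filter, Finset.mem_univ, true_and, Fin.le_def]
      constructor <;> (rintro ⟨h1, h2⟩; exact ⟨by omega, h2⟩)
    rw [ez, eo]
    exact zc_add_oc n (bI n I) ((j:ℕ)+1) (by omega)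
  have hbound : 2 * (Finset.univ.filter (fun i : Fin (2*n) => i ≤ j ∧ bI n I i = false)).card ≤ (j:ℕ) + 1 := by
    have e : (Finset.univ.filter (fun i : Fin (2*n) => i ≤ j ∧ bI n I i = false))
        = (Finset.univ.filter (fun k : Fin n => pos n I (k:ℕ) ≤ (j:ℕ))).image
            (fun k : Fin n => (⟨pos n I (k:ℕ), pos_ub n I hn hI (k:ℕ) k.isLt⟩ : Fin (2*n))) := by
      ext t
      simp only [Finset.mem_filter, Finset.mem_univ, true_and, Finset.mem_image, Fin.le_def,
        bI_false_iff]
      constructor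
      · rintro ⟨h1, k, hk, he⟩
        exact ⟨⟨k, hk⟩, (by omega : pos n I k ≤ (j:ℕ)), Fin.val_injective he⟩
      · rintro ⟨k, hk, rfl⟩
        exact ⟨hk, (k:ℕ), k.isLt, rfl⟩
    rw [e, Finset.card_image_of_injective _ (posF_injective n I hn hI)]
    have hsub : (Finset.univ.filter (fun k : Fin n => pos n I (k:ℕ) ≤ (j:ℕ))).card
        ≤ (Finset.range (((j:ℕ)+1)/2)).card := by
      apply Finset.card_le_card_of_injOn (fun k : Fin n => (k:ℕ))
      · intro k hk
        rw [Finset.mem_coe, Finset.mem_filter] at hk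
        have := pos_lb n I hI (k:ℕ) k.isLt
        simp only [Finset.mem_coe, Finset.mem_range]
        omega
      · intro k _ k' _ h
        exact Fin.val_injective h
    rw [Finset.card_range] at hsub
    omega
  omega

lemma bI_inj (hn : 1 ≤ n) (I' : Finset (Fin (n-1) × Fin (n-1))) (hI : IsIdeal n I)
    (hI' : IsIdeal n I') (heq : bI n I = bI n I') : I = I' := by
  set f := fun k : Fin n => (⟨pos n I (k:ℕ), pos_ub n I hn hI (k:ℕ) k.isLt⟩ : Fin (2*n)) with hf
  set g := fun k : Fin n => (⟨pos n I' (k:ℕ), pos_ub n I' hn hI' (k:ℕ) k.isLt⟩ : Fin (2*n)) with hg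
  have hZ : Finset.univ.image f = Finset.univ.image g := by
    rw [← zeros_eq n I hn hI, ← zeros_eq n I' hn hI', heq]
  have hfsm : StrictMono f := by
    intro k k' hkk
    rw [Fin.lt_def]
    exact pos_strictMono n I hI (by rwa [Fin.lt_def] at hkk) k'.isLt
  have hgsm : StrictMono g := by
    intro k k' hkk
    rw [Fin.lt_def]
    exact pos_strictMono n I' hI' (by rwa [Fin.lt_def] at hkk) k'.isLt
  have hcard : (Finset.univ.image f).card = n := by
    rw [Finset.card_image_of_injective _ hfsm.injective]; simp
  have hfe := Finset.orderEmbOfFin_unique hcard (f := f) (fun x => Finset.mem_image_of_mem _ (Finset.mem_univ x)) hfsm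
  have hge := Finset.orderEmbOfFin_unique hcard (f := g)
    (fun x => by rw [hZ]; exact Finset.mem_image_of_mem _ (Finset.mem_univ x)) hgsm
  have hfg : f = g := by rw [hfe, hge]
  have hpos : ∀ k, k < n → pos n I k = pos n I' k := by
    intro k hk
    have := congrFun hfg ⟨k, hk⟩
    rw [Fin.ext_iff] at this
    exact this
  have hrc : ∀ i, i < n-1 → rc n I i = rc n I' i := by
    intro i hi
    have h1 := hpos i (by omega)
    rw [pos, pos, if_pos hi, if_pos hi] at h1
    have h2 := rc_le n I hI i hi
    have h3 := rc_le n I' hI' i hi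
    omega
  ext p
  rw [mem_iff_rc n I hI p, mem_iff_rc n I' hI' p, hrc (p.1:ℕ) p.1.isLt]

end BI



/-- Ballot sequences of length `2n` (binary sequences with `n` ones and
`n` zeros such that every prefix has at least as many ones as zeros) are in bijection
with upper order ideals in the poset of positive roots of type `A (n-1)`
(pairs `[i,j]`, `i ≤ j`, ordered by `[i,j] ≼ [i',j']` iff `i' ≤ i ∧ j ≤ j'`). -/
theorem ballot_equiv_ideals (n : ℕ) (hn : 1 ≤ n) :
    Nonempty
      ({b : Fin (2 * n) → Bool //
          (Finset.univ.filter (fun i => b i = true)).card = n ∧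
          (Finset.univ.filter (fun i => b i = false)).card = n ∧
          ∀ j : Fin (2 * n),
            (Finset.univ.filter (fun i => i ≤ j ∧ b i = false)).card ≤
            (Finset.univ.filter (fun i => i ≤ j ∧ b i = true)).card} ≃
        {I : Finset (Fin (n - 1) × Fin (n - 1)) //
          (∀ p ∈ I, p.1 ≤ p.2) ∧
          (∀ p ∈ I, ∀ q : Fin (n - 1) × Fin (n - 1),
            q.1 ≤ q.2 → q.1 ≤ p.1 → p.2 ≤ q.2 → q ∈ I)}) := by
  apply Fintype.card_eq.mp
  apply le_antisymm
  · exact Fintype.card_le_of_injective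
      (fun b => ⟨BI.idl n b.1, BI.idl_le n b.1, BI.idl_upper n b.1⟩)
      (fun b b' h => Subtype.ext (BI.idl_inj n b.1 b'.1 b.2 b'.2 (congrArg Subtype.val h)))
  · exact Fintype.card_le_of_injective
      (fun I => ⟨BI.bI n I.1, BI.bI_ballot n I.1 hn I.2⟩)
      (fun I I' h => Subtype.ext (BI.bI_inj n I.1 hn I'.1 I.2 I'.2 (congrArg Subtype.val h)))
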